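/- For all integers j ≥ 2, the identity 2 * (sum over j1 + j2 = j - 1 of a_{j1} * d_{j2}) + 2*a_{j-1} = d_j holds. -/

import Mathlib

def a (j : ℕ) : ℚ :=
  (Nat.factorial (2 * j) : ℚ) / ((Nat.factorial j : ℚ) * (Nat.factorial (j + 1) : ℚ))

def d (j : ℕ) : ℚ :=
  if j < 2 then 0
  else ∑ p ∈ Finset.HasAntidiagonal.antidiagonal (j - 2),
        ∑ q ∈ Finset.HasAntidiagonal.antidiagonal p.2,
          2 * ((p.1 : ℚ) + 1) * a p.1 * a q.1 * a q.2

open Finset Nat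

/-- rational catalan number -/
noncomputable def c (j : ℕ) : ℚ := (catalan j : ℚ)

/-- rational central binomial, as (j+1)*catalan j -/
noncomputable def e (j : ℕ) : ℚ := ((j : ℚ) + 1) * c j

lemma a_eq (j : ℕ) : a j = c j := by
  have h1 : (2 * j).choose j * j.factorial * j.factorial = (2 * j).factorial := by
    have := Nat.choose_mul_factorial_mul_factorial (n := 2 * j) (k := j) (by omega)
    simpa [show 2 * j - j = j by omega] using this
  have h2 : (j + 1) * catalan j = (2 * j).choose j := by
    simpa [Nat.centralBinom] using succ_mul_catalan_eq_centralBinom j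
  rw [a, c, div_eq_iff (by positivity)]
  have h1q : ((2 * j).choose j : ℚ) * j.factorial * j.factorial = (2 * j).factorial := by
    exact_mod_cast congrArg (Nat.cast (R := ℚ)) h1
  have h2q : ((j : ℚ) + 1) * catalan j = (2 * j).choose j := by
    exact_mod_cast congrArg (Nat.cast (R := ℚ)) h2
  rw [← h1q, ← h2q, Nat.factorial_succ]
  push_cast
  ring

lemma conv_cc (n : ℕ) : ∑ p ∈ antidiagonal n, c p.1 * c p.2 = c (n + 1) := by
  rw [c, catalan_succ']
  push_cast [c]
  rfl

lemma swap_ce (n : ℕ) :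
    ∑ p ∈ antidiagonal n, c p.2 * e p.1 = ∑ p ∈ antidiagonal n, c p.1 * e p.2 := by
  rw [← Finset.Nat.sum_antidiagonal_swap (f := fun p => c p.2 * e p.1)]
  exact Finset.sum_congr rfl fun p _ => by cases p; rfl

lemma K (n : ℕ) : ∑ p ∈ antidiagonal n, c p.1 * e p.2 = ((n : ℚ) + 2) / 2 * c (n + 1) := by
  have key : (∑ p ∈ antidiagonal n, c p.1 * e p.2) + ∑ p ∈ antidiagonal n, c p.2 * e p.1
      = ((n : ℚ) + 2) * c (n + 1) := by
    rw [← Finset.sum_add_distrib, ← conv_cc n, Finset.mul_sum]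
    refine Finset.sum_congr rfl fun p hp => ?_
    have hpq : p.1 + p.2 = n := Finset.HasAntidiagonal.mem_antidiagonal.mp hp
    have hq : ((p.1 : ℚ)) + p.2 = n := by exact_mod_cast congrArg (Nat.cast (R := ℚ)) hpq
    simp only [e]
    linear_combination (c p.1 * c p.2) * hq
  rw [swap_ce] at key
  linarith [key]

lemma d_closed (t : ℕ) : d (t + 1) = e (t + 1) - 2 * e t := by
  match t with
  | 0 =>
    simp [d, e, c, catalan_one, catalan_zero]
    norm_num
  | s + 1 =>
    have h2 : ¬ (s + 1 + 1 < 2) := by omega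
    rw [d, if_neg h2]
    have hs : s + 1 + 1 - 2 = s := rfl
    rw [hs]
    have inner : ∀ p ∈ antidiagonal s,
        (∑ q ∈ antidiagonal p.2, 2 * ((p.1 : ℚ) + 1) * a p.1 * a q.1 * a q.2)
          = 2 * (e p.1 * c (p.2 + 1)) := by
      intro p _
      have h : (∑ q ∈ antidiagonal p.2, 2 * ((p.1 : ℚ) + 1) * a p.1 * a q.1 * a q.2)
          = 2 * ((p.1 : ℚ) + 1) * a p.1 * ∑ q ∈ antidiagonal p.2, c q.1 * c q.2 := by
        rw [Finset.mul_sum]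
        refine Finset.sum_congr rfl fun q _ => ?_
        rw [a_eq q.1, a_eq q.2]; ring
      rw [h, conv_cc, a_eq, e]; ring
    rw [Finset.sum_congr rfl inner, ← Finset.mul_sum]
    have peel : ∑ p ∈ antidiagonal (s + 1), e p.1 * c p.2
        = e (s + 1) * c 0 + ∑ p ∈ antidiagonal s, e p.1 * c (p.2 + 1) :=
      Finset.Nat.sum_antidiagonal_succ' (f := fun p => e p.1 * c p.2)
    have hswap : ∑ p ∈ antidiagonal (s + 1), e p.1 * c p.2
        = ∑ p ∈ antidiagonal (s + 1), c p.1 * e p.2 := by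
      rw [← swap_ce]
      exact Finset.sum_congr rfl fun p _ => mul_comm _ _
    have hK : ∑ p ∈ antidiagonal (s + 1), e p.1 * c p.2 = ((s : ℚ) + 3) / 2 * c (s + 2) := by
      rw [hswap, K (s + 1)]
      simp only [show s + 1 + 1 = s + 2 from rfl]
      push_cast
      ring
    have hc0 : c 0 = 1 := by simp [c]
    rw [hK, hc0, mul_one] at peel
    have hsum : ∑ p ∈ antidiagonal s, e p.1 * c (p.2 + 1)
        = ((s : ℚ) + 3) / 2 * c (s + 2) - e (s + 1) := by linarith [peel]
    rw [hsum]
    show _ = e (s + 2) - 2 * e (s + 1)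
    rw [e, e]
    push_cast
    ring

theorem ad_convolution (j : ℕ) (hj : 2 ≤ j) :
    2 * (∑ p ∈ Finset.HasAntidiagonal.antidiagonal (j - 1), a p.1 * d p.2) + 2 * a (j - 1) = d j := by
  obtain ⟨n, rfl⟩ : ∃ n, j = n + 2 := ⟨j - 2, by omega⟩
  have h1 : n + 2 - 1 = n + 1 := rfl
  rw [h1]
  have peel : ∑ p ∈ antidiagonal (n + 1), a p.1 * d p.2
      = a (n + 1) * d 0 + ∑ p ∈ antidiagonal n, a p.1 * d (p.2 + 1) :=
    Finset.Nat.sum_antidiagonal_succ' (f := fun p => a p.1 * d p.2)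
  have hd0 : d 0 = 0 := by simp [d]
  rw [peel, hd0, mul_zero, zero_add]
  have step : ∀ p ∈ antidiagonal n, a p.1 * d (p.2 + 1)
      = c p.1 * e (p.2 + 1) - 2 * (c p.1 * e p.2) := by
    intro p _
    rw [a_eq, d_closed]; ring
  rw [Finset.sum_congr rfl step, Finset.sum_sub_distrib, ← Finset.mul_sum]
  set S := ∑ p ∈ antidiagonal n, c p.1 * e (p.2 + 1) with hS
  have peel2 : ∑ p ∈ antidiagonal (n + 1), c p.1 * e p.2 = c (n + 1) * e 0 + S :=
    Finset.Nat.sum_antidiagonal_succ' (f := fun p => c p.1 * e p.2)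
  have hK1 : c (n + 1) * e 0 + S = ((n : ℚ) + 3) / 2 * c (n + 2) := by
    rw [← peel2, K (n + 1)]
    simp only [show n + 1 + 1 = n + 2 from rfl]
    push_cast
    ring
  have he0 : e 0 = 1 := by simp [e, c]
  rw [he0, mul_one] at hK1
  rw [K n, a_eq (n + 1)]
  have hd : d (n + 2) = e (n + 2) - 2 * e (n + 1) := d_closed (n + 1)
  rw [show n + 1 + 1 = n + 2 from rfl] at hd
  rw [hd, e, e]
  push_cast
  linear_combination 2 * hK1
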